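/- For every real r, define the sequence (u_n(r)) by u_0(r) = 1, u_1(r) = r, and u_{n+1}(r) = r·u_n(r) − u_{n−1}(r) (so u_n(r) is a Chebyshev polynomial of the second kind evaluated at the half-argument, u_n(2cos θ) = sin((n+1)θ)/sin θ). Then for all real p, q, r with p, q, r > 0 and r < 2, there exists a positive integer n such that u_{n+1}(r)·q − u_n(r)·p < 0. -/
import Mathlib


noncomputable section

/-- Chebyshev-type sequence: `u 0 = 1`, `u 1 = r`, `u (n+2) = r * u (n+1) - u n`. -/
def cheb (r : ℝ) : ℕ → ℝ
  | 0 => 1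
  | 1 => r
  | n + 2 => r * cheb r (n + 1) - cheb r n

lemma cheb_closed_form (r θ : ℝ) (hcos : Real.cos θ = r / 2) :
    ∀ n : ℕ, cheb r n * Real.sin θ = Real.sin ((n + 1) * θ) := by
  intro n
  induction n using Nat.strong_induction_on with
  | _ n ih =>
    match n with
    | 0 => simp [cheb]
    | 1 =>
      have : ((1 : ℕ) + 1 : ℝ) * θ = θ + θ := by push_cast; ring
      rw [cheb, this, Real.sin_add, hcos]; ring
    | n + 2 =>
      have h1 := ih (n + 1) (by omega)
      have h0 := ih n (by omega)
      have key : Real.sin ((n + 2 + 1 : ℕ) * θ)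
          = 2 * Real.cos θ * Real.sin ((n + 1 + 1 : ℕ) * θ) - Real.sin ((n + 1 : ℕ) * θ) := by
        have e1 : ((n + 2 + 1 : ℕ) : ℝ) * θ = ((n + 1 + 1 : ℕ) : ℝ) * θ + θ := by
          push_cast; ring
        have e0 : ((n + 1 : ℕ) : ℝ) * θ = ((n + 1 + 1 : ℕ) : ℝ) * θ - θ := by
          push_cast; ring
        rw [e1, e0, Real.sin_add, Real.sin_sub]; ring
      rw [hcos] at key
      rw [cheb, sub_mul]
      push_cast at key h1 h0 ⊢
      linear_combination r * h1 - h0 - key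

/-- for `p, q, r > 0` with `r < 2` there is a positive integer `n`
with `u_{n+1}(r) q - u_n(r) p < 0`. -/
theorem exists_cheb_combination_neg (p q r : ℝ)
    (hp : 0 < p) (hq : 0 < q) (hr : 0 < r) (hr2 : r < 2) :
    ∃ n : ℕ, 0 < n ∧ cheb r (n + 1) * q - cheb r n * p < 0 := by
  set θ := Real.arccos (r / 2) with hθdef
  have hhalf : r / 2 < 1 := by linarith
  have hhalf0 : 0 < r / 2 := by linarith
  have hθ0 : 0 < θ := Real.arccos_pos.mpr hhalf
  have hθlt : θ < Real.pi / 2 := by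
    have := Real.arccos_lt_pi_div_two (x := r / 2)
    rw [this]; exact hhalf0
  have hcos : Real.cos θ = r / 2 := Real.cos_arccos (by linarith) (by linarith)
  have hsin : 0 < Real.sin θ := Real.sin_pos_of_pos_of_lt_pi hθ0
    (lt_trans hθlt (by linarith [Real.pi_pos]))
  have hcf := cheb_closed_form r θ hcos
  set k : ℕ := ⌊Real.pi / θ⌋₊ with hk
  have hπθ : 2 < Real.pi / θ := by
    rw [lt_div_iff₀ hθ0]; linarith
  have hk2 : 2 ≤ k := Nat.le_floor (by exact_mod_cast hπθ.le)
  have hkle : (k : ℝ) * θ ≤ Real.pi := by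
    have := Nat.floor_le (le_of_lt (div_pos Real.pi_pos hθ0))
    calc (k : ℝ) * θ ≤ (Real.pi / θ) * θ := by
          apply mul_le_mul_of_nonneg_right this hθ0.le
      _ = Real.pi := by field_simp
  have hkgt : Real.pi < ((k : ℝ) + 1) * θ := by
    have := Nat.lt_floor_add_one (Real.pi / θ)
    calc Real.pi = (Real.pi / θ) * θ := by field_simp
      _ < ((k : ℝ) + 1) * θ := by
          apply mul_lt_mul_of_pos_right this hθ0
  refine ⟨k - 1, by omega, ?_⟩
  have hn1 : k - 1 + 1 = k := by omega
  have hcast : ((k - 1 : ℕ) : ℝ) + 1 = (k : ℝ) := by exact_mod_cast hn1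
  have hsk : 0 ≤ Real.sin ((k : ℝ) * θ) :=
    Real.sin_nonneg_of_nonneg_of_le_pi (by positivity) hkle
  have hsk1 : Real.sin (((k : ℝ) + 1) * θ) < 0 := by
    have e : ((k : ℝ) + 1) * θ = (((k : ℝ) + 1) * θ - Real.pi) + Real.pi := by ring
    have hpos : 0 < Real.sin (((k : ℝ) + 1) * θ - Real.pi) := by
      apply Real.sin_pos_of_pos_of_lt_pi
      · linarith
      · nlinarith [Real.pi_pos]
    rw [e, Real.sin_add_pi]
    linarith
  have hc1 : cheb r (k - 1) * Real.sin θ = Real.sin ((k : ℝ) * θ) := by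
    rw [hcf, hcast]
  have hc2 : cheb r (k - 1 + 1) * Real.sin θ = Real.sin (((k : ℝ) + 1) * θ) := by
    rw [hcf, hn1]
  have h1 : 0 ≤ cheb r (k - 1) := by nlinarith
  have h2 : cheb r (k - 1 + 1) < 0 := by nlinarith
  nlinarith
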